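/- arXiv:2303.05027 — 2 statements merged into one kernel-verified Lean document; each statement's English description precedes it below -/
import Mathlib

section
/- Let r ≥ 2 be a positive integer and λ > 1 a real number. Then there exists a constant c > 0 such that for every n ∈ ℕ, if R ⊆ {1,…,r}^{1,…,n} satisfies |R| ≥ ((r−1)λ)^n, then there exists a subset J ⊆ {1,…,n} with |J| ≥ c·n such that for every s ∈ {1,…,r}^J there exists š ∈ R with š(j) = s(j) for all j ∈ J. -/
open Finset

def Bd (r n k : ℕ) : ℕ := ∑ i ∈ Finset.range k, n.choose i * (r-1)^(n-i)

lemma Bd_succ (r n k : ℕ) : Bd r (n+1) (k+1) = (r-1) * Bd r n (k+1) + Bd r n k := by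
  unfold Bd
  rw [Finset.sum_range_succ', Finset.mul_sum, Finset.sum_range_succ' (fun i => (r-1) * (n.choose i * (r-1)^(n-i)))]
  have h1 : ∀ i ∈ Finset.range k, (n+1).choose (i+1) * (r-1)^(n+1-(i+1)) =
      (r-1) * (n.choose (i+1) * (r-1)^(n-(i+1))) + n.choose i * (r-1)^(n-i) := by
    intro i _
    have he : n + 1 - (i+1) = n - i := by omega
    rw [he, Nat.choose_succ_succ, Nat.add_mul]
    have h2 : (r-1) * (n.choose (i+1) * (r-1)^(n-(i+1))) = n.choose (i+1) * (r-1)^(n-i) := by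
      rcases Nat.lt_or_ge i n with h | h
      · have : n - i = (n - (i+1)) + 1 := by omega
        rw [this, pow_succ]; ring
      · rw [Nat.choose_eq_zero_of_lt (by omega)]; simp
    rw [h2]; ring
  rw [Finset.sum_congr rfl h1, Finset.sum_add_distrib]
  have : n + 1 - 0 = (n - 0) + 1 := by omega
  rw [Nat.choose_zero_right, Nat.choose_zero_right, this, pow_succ]
  ring

def Shat {r n : ℕ} (R : Finset (Fin n → Fin r)) (J : Finset (Fin n)) : Prop :=
  ∀ s : Fin n → Fin r, ∃ g ∈ R, ∀ j ∈ J, g j = s j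

theorem kma (r : ℕ) (hr : 1 ≤ r) : ∀ (n k : ℕ) (R : Finset (Fin n → Fin r)),
    (∀ J : Finset (Fin n), J.card = k → ¬ Shat R J) → R.card ≤ Bd r n k := by
  intro n
  induction n with
  | zero =>
    intro k R hR
    match k with
    | 0 =>
      have hRe : R = ∅ := by
        by_contra h
        obtain ⟨g, hg⟩ := Finset.nonempty_of_ne_empty h
        exact hR ∅ rfl (fun s => ⟨g, hg, fun j hj => absurd hj (Finset.notMem_empty j)⟩)
      simp [hRe, Bd]
    | k+1 =>
      have h1 : R.card ≤ 1 := by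
        calc R.card ≤ (Finset.univ : Finset (Fin 0 → Fin r)).card := Finset.card_le_card (Finset.subset_univ R)
        _ = 1 := by simp
      refine h1.trans ?_
      unfold Bd
      calc 1 = Nat.choose 0 0 * (r-1)^(0-0) := by simp
      _ ≤ _ := Finset.single_le_sum (f := fun i => Nat.choose 0 i * (r-1)^(0-i))
          (fun _ _ => Nat.zero_le _) (Finset.mem_range.mpr (Nat.succ_pos k))
  | succ n ih =>
    intro k R hR
    match k with
    | 0 =>
      have hRe : R = ∅ := by
        by_contra h
        obtain ⟨g, hg⟩ := Finset.nonempty_of_ne_empty h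
        exact hR ∅ rfl (fun s => ⟨g, hg, fun j hj => absurd hj (Finset.notMem_empty j)⟩)
      simp [hRe, Bd]
    | k+1 =>
      classical
      set A : Finset (Fin n → Fin r) := R.image Fin.tail with hA
      set F : Finset (Fin n → Fin r) := A.filter (fun f => ∀ a : Fin r, Fin.cons a f ∈ R) with hF
      -- fiber cardinality
      have hfib : ∀ f : Fin n → Fin r, (R.filter (fun g => Fin.tail g = f)).card =
          ((Finset.univ : Finset (Fin r)).filter (fun a => Fin.cons a f ∈ R)).card := by
        intro f
        apply Finset.card_bij (fun g _ => g 0)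
        · intro g hg
          rw [Finset.mem_filter] at hg ⊢
          refine ⟨Finset.mem_univ _, ?_⟩
          rw [← hg.2, Fin.cons_self_tail]
          exact hg.1
        · intro g hg g' hg' h
          rw [Finset.mem_filter] at hg hg'
          rw [← Fin.cons_self_tail g, ← Fin.cons_self_tail g', h, hg.2, hg'.2]
        · intro a ha
          rw [Finset.mem_filter] at ha
          exact ⟨Fin.cons a f, Finset.mem_filter.mpr ⟨ha.2, by simp⟩, by simp⟩
      -- fiber bound
      have hfb : ∀ f ∈ A, (R.filter (fun g => Fin.tail g = f)).card ≤
          (r-1) + (if f ∈ F then 1 else 0) := by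
        intro f hfA
        rw [hfib f]
        by_cases hf : f ∈ F
        · simp only [hf, if_pos]
          calc _ ≤ (Finset.univ : Finset (Fin r)).card := Finset.card_le_card (Finset.filter_subset _ _)
          _ = r := by simp
          _ = (r-1) + 1 := by omega
        · simp only [hf, if_neg, not_false_iff, add_zero]
          have : ∃ a : Fin r, Fin.cons a f ∉ R := by
            by_contra h
            push_neg at h
            exact hf (Finset.mem_filter.mpr ⟨hfA, h⟩)
          obtain ⟨a, haR⟩ := this
          have hsub : ((Finset.univ : Finset (Fin r)).filter (fun a => Fin.cons a f ∈ R)) ⊆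
              (Finset.univ : Finset (Fin r)).erase a := by
            intro b hb
            rw [Finset.mem_filter] at hb
            refine Finset.mem_erase.mpr ⟨?_, Finset.mem_univ b⟩
            rintro rfl; exact haR hb.2
          calc _ ≤ ((Finset.univ : Finset (Fin r)).erase a).card := Finset.card_le_card hsub
          _ = r - 1 := by rw [Finset.card_erase_of_mem (Finset.mem_univ a)]; simp
      -- card R decomposition
      have hcard : R.card ≤ (r-1) * A.card + F.card := by
        rw [Finset.card_eq_sum_card_image Fin.tail R, ← hA]
        calc ∑ f ∈ A, (R.filter (fun g => Fin.tail g = f)).card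
            ≤ ∑ f ∈ A, ((r-1) + (if f ∈ F then 1 else 0)) := Finset.sum_le_sum hfb
          _ = (r-1) * A.card + ∑ f ∈ A, (if f ∈ F then 1 else 0) := by
              rw [Finset.sum_add_distrib, Finset.sum_const, smul_eq_mul, mul_comm]
          _ = (r-1) * A.card + F.card := by
              congr 1
              rw [hF, Finset.card_filter]
              apply Finset.sum_congr rfl
              intro f hfA
              by_cases hf : (∀ a : Fin r, Fin.cons a f ∈ R) <;>
                simp [hf, Finset.mem_filter, hfA]
      -- A has no shattered (k+1)-set
      have hAs : ∀ J : Finset (Fin n), J.card = k+1 → ¬ Shat A J := by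
        intro J hJ hsh
        have hmap : (J.map ⟨Fin.succ, Fin.succ_injective n⟩).card = k+1 := by
          rw [Finset.card_map]; exact hJ
        apply hR _ hmap
        intro s
        obtain ⟨f, hfA, hf⟩ := hsh (Fin.tail s)
        rw [hA, Finset.mem_image] at hfA
        obtain ⟨g, hgR, rfl⟩ := hfA
        refine ⟨g, hgR, ?_⟩
        intro j' hj'
        rw [Finset.mem_map] at hj'
        obtain ⟨j, hjJ, rfl⟩ := hj'
        exact hf j hjJ
      -- F has no shattered k-set
      have hFs : ∀ J : Finset (Fin n), J.card = k → ¬ Shat F J := by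
        intro J hJ hsh
        have h0 : (0 : Fin (n+1)) ∉ J.map ⟨Fin.succ, Fin.succ_injective n⟩ := by
          rw [Finset.mem_map]
          rintro ⟨j, -, hj⟩
          exact Fin.succ_ne_zero j hj
        have hmap : (insert 0 (J.map ⟨Fin.succ, Fin.succ_injective n⟩)).card = k+1 := by
          rw [Finset.card_insert_of_notMem h0, Finset.card_map, hJ]
        apply hR _ hmap
        intro s
        obtain ⟨f, hfF, hf⟩ := hsh (Fin.tail s)
        rw [hF, Finset.mem_filter] at hfF
        refine ⟨Fin.cons (s 0) f, hfF.2 (s 0), ?_⟩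
        intro j' hj'
        rw [Finset.mem_insert] at hj'
        rcases hj' with rfl | hj'
        · exact Fin.cons_zero _ _
        · rw [Finset.mem_map] at hj'
          obtain ⟨j, hjJ, rfl⟩ := hj'
          simp only [Function.Embedding.coeFn_mk, Fin.cons_succ]
          exact hf j hjJ
      have hAcard := ih (k+1) A hAs
      have hFcard := ih k F hFs
      calc R.card ≤ (r-1) * A.card + F.card := hcard
        _ ≤ (r-1) * Bd r n (k+1) + Bd r n k := by
            gcongr
        _ = Bd r (n+1) (k+1) := by
            rw [← Bd_succ]

lemma sum_choose_le (n k : ℕ) (x : ℝ) (hx : 0 ≤ x) :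
    ∑ i ∈ Finset.range k, (n.choose i : ℝ) * x^i ≤ (1+x)^n := by
  have hfull : ∑ i ∈ Finset.range (max k (n+1)), (n.choose i : ℝ) * x^i = (1+x)^n := by
    rw [← Finset.sum_subset (Finset.range_subset_range.mpr (le_max_right k (n+1)))]
    · rw [show (1+x) = (x+1) from add_comm 1 x, add_pow]
      apply Finset.sum_congr rfl
      intro i hi
      simp [mul_comm]
    · intro i hi hni
      rw [Finset.mem_range, not_lt] at hni
      rw [Nat.choose_eq_zero_of_lt (by omega)]
      simp
  calc ∑ i ∈ Finset.range k, (n.choose i:ℝ) * x^i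
      ≤ ∑ i ∈ Finset.range (max k (n+1)), (n.choose i:ℝ) * x^i :=
        Finset.sum_le_sum_of_subset_of_nonneg (Finset.range_subset_range.mpr (le_max_left _ _))
          (fun i _ _ => by positivity)
    _ = (1+x)^n := hfull

/-- Karpovsky–Milman–Alon generalization of the Sauer–Perles–Shelah lemma. -/
theorem stmt0 (r : ℕ) (hr : 2 ≤ r) (lam : ℝ) (hlam : 1 < lam) :
    ∃ c : ℝ, 0 < c ∧ ∀ n : ℕ, ∀ R : Finset (Fin n → Fin r),
      (((r : ℝ) - 1) * lam) ^ n ≤ (R.card : ℝ) →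
      ∃ J : Finset (Fin n), c * n ≤ (J.card : ℝ) ∧
        ∀ s : Fin n → Fin r, ∃ sc ∈ R, ∀ j ∈ J, sc j = s j := by
  have hr1 : (1:ℝ) ≤ (r:ℝ) - 1 := by
    have : (2:ℝ) ≤ (r:ℝ) := by exact_mod_cast hr
    linarith
  set ρ : ℝ := (r:ℝ) - 1 with hρ
  have hρ0 : 0 < ρ := by linarith
  set μ := Real.sqrt lam with hμdef
  have hlam0 : (0:ℝ) < lam := by linarith
  have hμ : 1 < μ := by
    rw [hμdef]
    have := (Real.lt_sqrt (by norm_num : (0:ℝ) ≤ 1)).mpr (by nlinarith : (1:ℝ)^2 < lam)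
    exact this
  have hμμ : μ * μ = lam := Real.mul_self_sqrt (le_of_lt hlam0)
  set t := max 2 (1/(μ-1)) with htdef
  have ht2 : (2:ℝ) ≤ t := le_max_left _ _
  have ht1 : (1:ℝ) < t := by linarith
  have ht0 : (0:ℝ) < t := by linarith
  have hlogt : 0 < Real.log t := Real.log_pos ht1
  have hlogμ : 0 < Real.log μ := Real.log_pos hμ
  set c := Real.log μ / (2 * Real.log t) with hcdef
  have hc : 0 < c := div_pos hlogμ (by linarith)
  refine ⟨c, hc, ?_⟩
  intro n R hR
  rcases Nat.eq_zero_or_pos n with rfl | hn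
  · refine ⟨∅, by simp, ?_⟩
    intro s
    have h1 : (0:ℝ) < (R.card : ℝ) := by
      refine lt_of_lt_of_le ?_ hR
      norm_num
    have hne : R.Nonempty := Finset.card_pos.mp (by exact_mod_cast h1)
    obtain ⟨g, hg⟩ := hne
    exact ⟨g, hg, fun j hj => absurd hj (Finset.notMem_empty j)⟩
  · set k := ⌈c * (n:ℝ)⌉₊ with hkdef
    have hn0 : (0:ℝ) < (n:ℝ) := by exact_mod_cast hn
    have hcn : 0 < c * (n:ℝ) := mul_pos hc hn0
    have hk1 : 1 ≤ k := Nat.one_le_iff_ne_zero.mpr (by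
      simp only [hkdef, ne_eq, Nat.ceil_eq_zero, not_le]
      exact hcn)
    -- cast of Bd
    have hBd : (Bd r n k : ℝ) = ∑ i ∈ Finset.range k, (n.choose i : ℝ) * ρ^(n-i) := by
      rw [Bd]
      push_cast [Nat.cast_sub (show 1 ≤ r by omega)]
      rfl
    have hmain : (Bd r n k : ℝ) < (ρ * lam)^n := by
      rcases Nat.lt_or_ge k 2 with hk2 | hk2
      · -- k = 1
        have hke : k = 1 := by omega
        rw [hBd, hke]
        simp only [Finset.sum_range_one, Nat.choose_zero_right, Nat.cast_one, one_mul,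
          Nat.sub_zero]
        rw [mul_pow]
        have hl1 : (1:ℝ) < lam^n := one_lt_pow₀ hlam (by omega)
        nlinarith [pow_pos hρ0 n]
      · -- k ≥ 2
        have step1 : (Bd r n k : ℝ) ≤ ρ^n * ∑ i ∈ Finset.range k, (n.choose i : ℝ) := by
          rw [hBd, Finset.mul_sum]
          apply Finset.sum_le_sum
          intro i _
          rw [mul_comm (ρ^n) _]
          exact mul_le_mul_of_nonneg_left (pow_le_pow_right₀ hr1 (Nat.sub_le n i)) (by positivity)
        have step2 : ∑ i ∈ Finset.range k, (n.choose i : ℝ) ≤ t^k * (1+1/t)^n := by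
          calc ∑ i ∈ Finset.range k, (n.choose i : ℝ)
              ≤ ∑ i ∈ Finset.range k, (n.choose i : ℝ) * (t^k * (1/t)^i) := by
                apply Finset.sum_le_sum
                intro i hi
                rw [Finset.mem_range] at hi
                have h1 : (1:ℝ) ≤ t^k * (1/t)^i := by
                  have hp : (0:ℝ) < t^i := by positivity
                  rw [one_div, inv_pow, ← div_eq_mul_inv]
                  exact (one_le_div hp).mpr (pow_le_pow_right₀ (le_of_lt ht1) (le_of_lt hi))
                nlinarith [Nat.cast_nonneg (n.choose i) (α := ℝ)]
            _ = t^k * ∑ i ∈ Finset.range k, (n.choose i : ℝ) * (1/t)^i := by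
                rw [Finset.mul_sum]; apply Finset.sum_congr rfl; intro i _; ring
            _ ≤ t^k * (1+1/t)^n := by
                apply mul_le_mul_of_nonneg_left (sum_choose_le n k (1/t) (by positivity))
                  (by positivity)
        have stepb : (t:ℝ)^k < μ^n := by
          have hck : (k:ℝ) < 2*c*(n:ℝ) := by
            have h1 : 1 < c * (n:ℝ) := by
              by_contra h
              push_neg at h
              have : k ≤ 1 := Nat.ceil_le.mpr (by exact_mod_cast h)
              omega
            have h2 : (k:ℝ) < c*(n:ℝ) + 1 := Nat.ceil_lt_add_one (le_of_lt hcn)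
            linarith
          have ht2c : t^((2:ℝ)*c) ≤ μ := by
            have hle : (2*c) * Real.log t = Real.log μ := by
              rw [hcdef]; field_simp
            rw [Real.rpow_def_of_pos ht0, mul_comm (Real.log t) _, hle,
              Real.exp_log (by linarith : (0:ℝ) < μ)]
          calc (t:ℝ)^k = t^((k:ℕ):ℝ) := (Real.rpow_natCast t k).symm
            _ < t^((2*c)*(n:ℝ)) := by
                rw [Real.rpow_lt_rpow_left_iff ht1]
                linarith
            _ = (t^((2:ℝ)*c))^n := by
                rw [Real.rpow_mul (le_of_lt ht0), Real.rpow_natCast]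
            _ ≤ μ^n := pow_le_pow_left₀ (Real.rpow_nonneg (le_of_lt ht0) _) ht2c n
        have stepa : ((1:ℝ)+1/t)^n ≤ μ^n := by
          have hμ1 : (0:ℝ) < μ - 1 := by linarith
          have h3 : 1 ≤ t * (μ-1) := by
            have := (div_le_iff₀ hμ1).mp (le_max_right 2 (1/(μ-1)))
            linarith
          have h1t : 1 + 1/t ≤ μ := by
            have h4 : 1/t ≤ μ - 1 := by
              rw [div_le_iff₀ ht0]
              nlinarith
            linarith
          exact pow_le_pow_left₀ (by positivity) h1t n
        calc (Bd r n k : ℝ) ≤ ρ^n * (t^k * (1+1/t)^n) := by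
              refine step1.trans ?_
              exact mul_le_mul_of_nonneg_left step2 (by positivity)
          _ < ρ^n * (μ^n * μ^n) := by
              apply mul_lt_mul_of_pos_left _ (by positivity)
              exact mul_lt_mul stepb stepa (by positivity) (by positivity)
          _ = (ρ * lam)^n := by
              rw [← mul_pow, ← mul_pow, hμμ]
    have hlt : Bd r n k < R.card := by
      have h := hmain.trans_le hR
      exact_mod_cast h
    have hnshat : ¬ (∀ J : Finset (Fin n), J.card = k →
        ¬ (∀ s : Fin n → Fin r, ∃ g ∈ R, ∀ j ∈ J, g j = s j)) := by
      intro h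
      exact absurd (kma r (by omega) n k R h) (not_le.mpr hlt)
    push_neg at hnshat
    obtain ⟨J, hJcard, hJshat⟩ := hnshat
    refine ⟨J, ?_, hJshat⟩
    rw [hJcard]
    exact Nat.le_ceil _
end

section
/- Let (X,𝒳,μ,T) be an invertible measure-preserving system, y a point with fiber measure μ_y satisfying the equivariance (T^i)_*μ_y = μ_{S^i y}, α a partition of X into r atoms, and l ∈ ℕ. For times 0 ≤ b₁ < b₂ < ⋯ < b_k with b_{j+1} − b_j a positive multiple of l, one has H_{μ_y}(⋁_{j=1}^k T^{−b_j} α) ≥ Σ_{j=1}^k h_{μ_{S^{b_j} y}}(T^l, α), where h_{μ_z}(T^l,α) := lim_{n→∞} H_{μ_z}(α | ⋁_{i=1}^n T^{−il} α). -/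
open MeasureTheory Filter

/-- Shannon entropy of a finite measurable partition `α` under a measure `m`. -/
noncomputable def partEnt {X : Type*} [MeasurableSpace X] (m : Measure X)
    {ι : Type*} [Fintype ι] (α : ι → Set X) : ℝ :=
  ∑ i, Real.negMulLog (m (α i)).toReal

/-- Conditional Shannon entropy `H_m(α | β)` of finite partitions. -/
noncomputable def condEnt {X : Type*} [MeasurableSpace X] (m : Measure X)
    {ι κ : Type*} [Fintype ι] [Fintype κ] (α : ι → Set X) (β : κ → Set X) : ℝ :=
  ∑ i, ∑ k,
    -((m (α i ∩ β k)).toReal * Real.log ((m (α i ∩ β k)).toReal / (m (β k)).toReal))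

/-- The join `⋁_{i=1}^n T^{-il} α`, as a partition indexed by `Fin n → Fin r`. -/
def joinIter {X : Type*} (T : X → X) (l : ℕ) {r : ℕ} (α : Fin r → Set X) (n : ℕ) :
    (Fin n → Fin r) → Set X :=
  fun s => ⋂ i : Fin n, T^[((i : ℕ) + 1) * l] ⁻¹' α (s i)

/-- The fiber dynamical entropy `h_m(T^l, α) = lim_n H_m(α | ⋁_{i=1}^n T^{-il} α)`
(the limit exists since the sequence is monotone; we record it as a `limsup`). -/
noncomputable def fiberDynEnt {X : Type*} [MeasurableSpace X] (m : Measure X)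
    (T : X → X) (l : ℕ) {r : ℕ} (α : Fin r → Set X) : ℝ :=
  limsup (fun n => condEnt m α (joinIter T l α n)) atTop

/-! ### Real-valued helper lemmas -/

section RealLemmas

open Real Finset

/-- Pointwise estimate used in the log-sum inequality. -/
lemma logsum_pointwise {a b A B : ℝ} (ha : 0 ≤ a) (hab : a ≤ b)
    (haA : a ≤ A) (hbB : b ≤ B) :
    a * Real.log (A / B) + a - b * (A / B) ≤ a * Real.log (a / b) := by
  rcases eq_or_lt_of_le ha with h0 | h0
  · have hb : 0 ≤ b := le_trans ha hab
    have hA : 0 ≤ A := le_trans ha haA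
    have hB : 0 ≤ B := le_trans hb hbB
    have : 0 ≤ b * (A / B) := by positivity
    simp only [← h0, zero_mul, zero_add, zero_sub, neg_nonpos]
    linarith
  · have hb : 0 < b := lt_of_lt_of_le h0 hab
    have hA : 0 < A := lt_of_lt_of_le h0 haA
    have hB : 0 < B := lt_of_lt_of_le hb hbB
    have hx : 0 < b * A / (a * B) := by positivity
    have hlog : Real.log (b * A / (a * B)) ≤ b * A / (a * B) - 1 :=
      Real.log_le_sub_one_of_pos hx
    have hsplit : Real.log (b * A / (a * B)) =
        Real.log (A / B) - Real.log (a / b) := by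
      rw [Real.log_div (by positivity) (by positivity),
        Real.log_div (ne_of_gt hA) (ne_of_gt hB),
        Real.log_div (ne_of_gt h0) (ne_of_gt hb),
        Real.log_mul (ne_of_gt hb) (ne_of_gt hA),
        Real.log_mul (ne_of_gt h0) (ne_of_gt hB)]
      ring
    -- from hlog: log(A/B) - log(a/b) ≤ bA/(aB) - 1
    -- multiply by a > 0 : a log(A/B) - a log(a/b) ≤ bA/B - a
    have h1 : a * (Real.log (A / B) - Real.log (a / b)) ≤ a * (b * A / (a * B) - 1) := by
      apply mul_le_mul_of_nonneg_left _ (le_of_lt h0)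
      rw [← hsplit]; exact hlog
    have h2 : a * (b * A / (a * B) - 1) = b * (A / B) - a := by
      field_simp
    nlinarith [h1, h2]

/-- The log-sum inequality over a finite set, with the convention `x/0 = 0`,
`log 0 = 0`, valid since `a ≤ b` pointwise. -/
lemma logsum_finset {ι : Type*} (s : Finset ι) (a b : ι → ℝ)
    (h0 : ∀ i ∈ s, 0 ≤ a i) (hab : ∀ i ∈ s, a i ≤ b i) :
    (∑ i ∈ s, a i) * Real.log ((∑ i ∈ s, a i) / (∑ i ∈ s, b i)) ≤
      ∑ i ∈ s, a i * Real.log (a i / b i) := by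
  set A := ∑ i ∈ s, a i with hA
  set B := ∑ i ∈ s, b i with hB
  have hb0 : ∀ i ∈ s, 0 ≤ b i := fun i hi => le_trans (h0 i hi) (hab i hi)
  have hA0 : 0 ≤ A := Finset.sum_nonneg h0
  rcases eq_or_lt_of_le (Finset.sum_nonneg hb0 : 0 ≤ B) with hB0 | hB0
  · have hballz : ∀ i ∈ s, b i = 0 :=
      (Finset.sum_eq_zero_iff_of_nonneg hb0).1 hB0.symm
    have haallz : ∀ i ∈ s, a i = 0 := fun i hi =>
      le_antisymm (by rw [← hballz i hi]; exact hab i hi) (h0 i hi)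
    have hA' : A = 0 := Finset.sum_eq_zero haallz
    have hr : ∑ i ∈ s, a i * Real.log (a i / b i) = 0 :=
      Finset.sum_eq_zero fun i hi => by rw [haallz i hi]; ring
    rw [hA', hr]
    simp
  · have key : ∀ i ∈ s, a i * Real.log (A / B) + a i - b i * (A / B)
        ≤ a i * Real.log (a i / b i) := fun i hi =>
      logsum_pointwise (h0 i hi) (hab i hi)
        (Finset.single_le_sum h0 hi) (Finset.single_le_sum hb0 hi)
    have hsum := Finset.sum_le_sum key
    have hlhs : ∑ i ∈ s, (a i * Real.log (A / B) + a i - b i * (A / B))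
        = A * Real.log (A / B) + A - B * (A / B) := by
      rw [Finset.sum_sub_distrib, Finset.sum_add_distrib, ← Finset.sum_mul,
        ← Finset.sum_mul]
    have hBA : B * (A / B) = A := by
      field_simp
      exact mul_div_cancel_left₀ A hB0.ne'
    rw [hlhs, hBA] at hsum
    linarith

/-- Per-fiber chain rule identity for Shannon entropy. -/
lemma chain_real {ι : Type*} [Fintype ι] (p : ι → ℝ) (hp : ∀ i, 0 ≤ p i)
    (q : ℝ) (hq : q = ∑ i, p i) :
    ∑ i, Real.negMulLog (p i) =
      Real.negMulLog q + ∑ i, -(p i * Real.log (p i / q)) := by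
  have hq0 : 0 ≤ q := hq ▸ Finset.sum_nonneg (fun i _ => hp i)
  rcases eq_or_lt_of_le hq0 with h | h
  · have : ∀ i ∈ Finset.univ, p i = 0 :=
      (Finset.sum_eq_zero_iff_of_nonneg (fun i _ => hp i)).1 (hq ▸ h.symm)
    have hz : ∀ i : ι, p i = 0 := fun i => this i (Finset.mem_univ i)
    simp [hz, ← h]
  · have key : ∀ i : ι, -(p i * Real.log (p i / q)) =
        Real.negMulLog (p i) + p i * Real.log q := by
      intro i
      rcases eq_or_lt_of_le (hp i) with h0 | h0
      · simp [← h0]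
      · rw [Real.log_div (ne_of_gt h0) (ne_of_gt h), Real.negMulLog]
        ring
    rw [Finset.sum_congr rfl (fun i _ => key i), Finset.sum_add_distrib,
      ← Finset.sum_mul, ← hq, Real.negMulLog]
    ring

lemma term_nonneg {a b : ℝ} (ha : 0 ≤ a) (hab : a ≤ b) :
    0 ≤ -(a * Real.log (a / b)) := by
  rcases eq_or_lt_of_le ha with h0 | h0
  · simp [← h0]
  · have hb : 0 < b := lt_of_lt_of_le h0 hab
    have h1 : a / b ≤ 1 := (div_le_one hb).2 hab
    have h2 : Real.log (a / b) ≤ 0 := Real.log_nonpos (by positivity) h1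
    have := mul_nonpos_of_nonneg_of_nonpos ha h2
    linarith

end RealLemmas

/-! ### Measure-theoretic helper lemmas -/

section MeasureLemmas

open Set

variable {X : Type*} [MeasurableSpace X] (m : Measure X) [IsFiniteMeasure m]

lemma toReal_inter_le (E G : Set X) : (m (E ∩ G)).toReal ≤ (m G).toReal :=
  ENNReal.toReal_mono (measure_ne_top m G) (measure_mono inter_subset_right)

lemma condEnt_nonneg {ι κ : Type*} [Fintype ι] [Fintype κ]
    (A : ι → Set X) (B : κ → Set X) : 0 ≤ condEnt m A B := by
  refine Finset.sum_nonneg fun i _ => Finset.sum_nonneg fun k _ => ?_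
  exact term_nonneg ENNReal.toReal_nonneg (toReal_inter_le m (A i) (B k))

/-- Decomposition of the measure of `E ∩ β k` over the fibers of a refining
partition `γ`. -/
lemma decomp_toReal {κ κ' : Type*} [Fintype κ'] [DecidableEq κ]
    (β : κ → Set X) (γ : κ' → Set X) (π : κ' → κ)
    (hγm : ∀ c, MeasurableSet (γ c))
    (hγd : Pairwise (Function.onFun Disjoint γ))
    (hγc : ⋃ c, γ c = Set.univ)
    (hβd : Pairwise (Function.onFun Disjoint β))
    (hsub : ∀ c, γ c ⊆ β (π c))
    (E : Set X) (hE : MeasurableSet E) (k : κ) :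
    (m (E ∩ β k)).toReal =
      ∑ c ∈ Finset.univ.filter (fun c => π c = k), (m (E ∩ γ c)).toReal := by
  have hset : E ∩ β k = ⋃ c ∈ Finset.univ.filter (fun c => π c = k), (E ∩ γ c) := by
    ext x
    constructor
    · rintro ⟨hxE, hxB⟩
      have hx : x ∈ ⋃ c, γ c := hγc ▸ Set.mem_univ x
      obtain ⟨c, hc⟩ := Set.mem_iUnion.1 hx
      have hk : π c = k := by
        by_contra hne
        exact (Set.disjoint_left.1 (hβd hne)) (hsub c hc) hxB
      exact Set.mem_iUnion₂.2 ⟨c, by simp [hk], ⟨hxE, hc⟩⟩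
    · intro hx
      obtain ⟨c, hcmem, hxc⟩ := Set.mem_iUnion₂.1 hx
      have hk : π c = k := by simpa using hcmem
      exact ⟨hxc.1, hk ▸ hsub c hxc.2⟩
  rw [hset, measure_biUnion_finset ?_ (fun c _ => hE.inter (hγm c))]
  · exact ENNReal.toReal_sum (fun c _ => measure_ne_top m _)
  · intro c hc c' hc' hne
    exact Disjoint.mono inter_subset_right inter_subset_right (hγd hne)

/-- Conditioning on a finer partition decreases conditional entropy. -/
lemma condEnt_le_of_refines {ι κ κ' : Type*} [Fintype ι] [Fintype κ] [Fintype κ']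
    [DecidableEq κ]
    (A : ι → Set X) (hA : ∀ i, MeasurableSet (A i))
    (β : κ → Set X) (γ : κ' → Set X) (π : κ' → κ)
    (hγm : ∀ c, MeasurableSet (γ c))
    (hγd : Pairwise (Function.onFun Disjoint γ))
    (hγc : ⋃ c, γ c = Set.univ)
    (hβd : Pairwise (Function.onFun Disjoint β))
    (hsub : ∀ c, γ c ⊆ β (π c)) :
    condEnt m A γ ≤ condEnt m A β := by
  unfold condEnt
  refine Finset.sum_le_sum fun i _ => ?_
  rw [← Finset.sum_fiberwise Finset.univ π
    (fun c => -((m (A i ∩ γ c)).toReal *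
      Real.log ((m (A i ∩ γ c)).toReal / (m (γ c)).toReal)))]
  refine Finset.sum_le_sum fun k _ => ?_
  have hP := decomp_toReal m β γ π hγm hγd hγc hβd hsub (A i) (hA i) k
  have hQ := decomp_toReal m β γ π hγm hγd hγc hβd hsub Set.univ MeasurableSet.univ k
  simp only [Set.univ_inter] at hQ
  rw [hP, hQ]
  have := logsum_finset (Finset.univ.filter (fun c => π c = k))
    (fun c => (m (A i ∩ γ c)).toReal) (fun c => (m (γ c)).toReal)
    (fun c _ => ENNReal.toReal_nonneg)
    (fun c _ => toReal_inter_le m (A i) (γ c))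
  calc ∑ c ∈ Finset.univ.filter (fun c => π c = k),
        -((m (A i ∩ γ c)).toReal * Real.log ((m (A i ∩ γ c)).toReal / (m (γ c)).toReal))
      = -∑ c ∈ Finset.univ.filter (fun c => π c = k),
        ((m (A i ∩ γ c)).toReal * Real.log ((m (A i ∩ γ c)).toReal / (m (γ c)).toReal)) := by
        rw [Finset.sum_neg_distrib]
    _ ≤ _ := neg_le_neg this

/-- Entropy of the join of a partition `A` with `B` equals `H(B) + H(A|B)`. -/
lemma partEnt_chain {ι κ : Type*} [Fintype ι] [Fintype κ]
    (A : ι → Set X) (B : κ → Set X)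
    (hAm : ∀ i, MeasurableSet (A i))
    (hAd : Pairwise (Function.onFun Disjoint A))
    (hAc : ⋃ i, A i = Set.univ)
    (hBm : ∀ k, MeasurableSet (B k)) :
    partEnt m (fun p : ι × κ => A p.1 ∩ B p.2) = partEnt m B + condEnt m A B := by
  have hq : ∀ k, (m (B k)).toReal = ∑ i, (m (A i ∩ B k)).toReal := by
    intro k
    have hBk : B k = ⋃ i, (A i ∩ B k) := by
      rw [← Set.iUnion_inter, hAc, Set.univ_inter]
    have hmeq : m (B k) = ∑ i, m (A i ∩ B k) := by
      conv_lhs => rw [hBk]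
      rw [measure_iUnion
        (fun i j hij => Disjoint.mono inter_subset_left inter_subset_left (hAd hij))
        (fun i => (hAm i).inter (hBm k)), tsum_fintype]
    rw [hmeq]
    exact ENNReal.toReal_sum (fun i _ => measure_ne_top m _)
  unfold partEnt condEnt
  rw [Fintype.sum_prod_type_right, Finset.sum_comm (γ := ι) (f := fun i k =>
    -((m (A i ∩ B k)).toReal * Real.log ((m (A i ∩ B k)).toReal / (m (B k)).toReal))),
    ← Finset.sum_add_distrib]
  refine Finset.sum_congr rfl fun k _ => ?_
  exact chain_real (fun i => (m (A i ∩ B k)).toReal)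
    (fun i => ENNReal.toReal_nonneg) ((m (B k)).toReal) (hq k)

end MeasureLemmas

section MapLemmas

open Set

lemma condEnt_map {X : Type*} [MeasurableSpace X] (m : Measure X)
    {ι κ : Type*} [Fintype ι] [Fintype κ]
    (f : X → X) (hf : Measurable f)
    (A : ι → Set X) (hA : ∀ i, MeasurableSet (A i))
    (B : κ → Set X) (hB : ∀ k, MeasurableSet (B k)) :
    condEnt (m.map f) A B =
      condEnt m (fun i => f ⁻¹' A i) (fun k => f ⁻¹' B k) := by
  unfold condEnt
  refine Finset.sum_congr rfl fun i _ => Finset.sum_congr rfl fun k _ => ?_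
  rw [Measure.map_apply hf ((hA i).inter (hB k)), Measure.map_apply hf (hB k),
    Set.preimage_inter]

end MapLemmas

/-! ### Partition families of the form `s ↦ ⋂ i, f i ⁻¹' α (s i)` -/

section Families

open Set

variable {X : Type*} {r : ℕ} (α : Fin r → Set X)

lemma fam_disjoint {J : Type*} (f : J → X → X)
    (hαdisj : Pairwise (Function.onFun Disjoint α)) :
    Pairwise (Function.onFun Disjoint (fun s : J → Fin r => ⋂ i, f i ⁻¹' α (s i))) := by
  intro s t hst
  obtain ⟨i, hi⟩ := Function.ne_iff.1 hst
  exact Disjoint.mono (Set.iInter_subset _ i) (Set.iInter_subset _ i)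
    (Disjoint.preimage (f i) (hαdisj hi))

lemma fam_cover {J : Type*} (f : J → X → X)
    (hαcover : ⋃ i, α i = Set.univ) :
    ⋃ s : J → Fin r, ⋂ i, f i ⁻¹' α (s i) = Set.univ := by
  rw [Set.eq_univ_iff_forall]
  intro x
  have hex : ∀ i : J, ∃ j : Fin r, f i x ∈ α j := by
    intro i
    have : f i x ∈ ⋃ j, α j := hαcover ▸ Set.mem_univ _
    exact Set.mem_iUnion.1 this
  choose s hs using hex
  exact Set.mem_iUnion.2 ⟨s, Set.mem_iInter.2 hs⟩

lemma fam_meas [MeasurableSpace X] {J : Type*} [Countable J] (f : J → X → X)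
    (hf : ∀ i, Measurable (f i)) (hαm : ∀ i, MeasurableSet (α i))
    (s : J → Fin r) : MeasurableSet (⋂ i, f i ⁻¹' α (s i)) :=
  MeasurableSet.iInter (fun i => (hf i) (hαm (s i)))

end Families

/-! ### Monotonicity of `condEnt` along `joinIter` and the `limsup` bound -/

section JoinIter

variable {X : Type*} [MeasurableSpace X] (m : Measure X) [IsFiniteMeasure m]
  (T : X → X) (hT : Measurable T) {r : ℕ} (α : Fin r → Set X)
  (hαm : ∀ i, MeasurableSet (α i))
  (hαdisj : Pairwise (Function.onFun Disjoint α))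
  (hαcover : ⋃ i, α i = Set.univ) (l : ℕ)

lemma joinIter_eq (n : ℕ) :
    joinIter T l α n = fun s => ⋂ i : Fin n, (fun x => T^[((i : ℕ) + 1) * l] x) ⁻¹' α (s i) :=
  rfl

include hT hαm hαdisj hαcover in
lemma condEnt_joinIter_antitone :
    Antitone (fun n => condEnt m α (joinIter T l α n)) := by
  apply antitone_nat_of_succ_le
  intro n
  refine condEnt_le_of_refines m α hαm (joinIter T l α n) (joinIter T l α (n + 1))
    (fun s => fun i : Fin n => s i.castSucc) ?_ ?_ ?_ ?_ ?_
  · exact fun s => fam_meas α (fun i : Fin (n+1) => T^[((i : ℕ) + 1) * l])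
      (fun i => hT.iterate _) hαm s
  · exact fam_disjoint α _ hαdisj
  · exact fam_cover α _ hαcover
  · exact fam_disjoint α _ hαdisj
  · intro s x hx
    have hx' : ∀ i : Fin (n + 1), T^[((i : ℕ) + 1) * l] x ∈ α (s i) := by
      simpa [joinIter, Set.mem_iInter] using hx
    simp only [joinIter, Set.mem_iInter, Set.mem_preimage]
    intro i
    exact hx' i.castSucc

include hT hαm hαdisj hαcover in
lemma fiberDynEnt_le [IsProbabilityMeasure m] (N : ℕ) :
    fiberDynEnt m T l α ≤ condEnt m α (joinIter T l α N) := by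
  have hanti := condEnt_joinIter_antitone m T hT α hαm hαdisj hαcover l
  apply Filter.limsup_le_of_le
  · refine isCoboundedUnder_le_of_eventually_le atTop (x := 0) ?_
    exact Eventually.of_forall (fun n => condEnt_nonneg m α (joinIter T l α n))
  · filter_upwards [eventually_ge_atTop N] with n hn
    exact hanti hn

end JoinIter

/-! ### Equivariance of fiber measures -/

lemma map_iterate {X Y : Type*} [MeasurableSpace X] [MeasurableSpace Y]
    (T : X → X) (hT : Measurable T) (S : Y → Y) (μy : Y → Measure X)
    (hequiv : ∀ y, (μy y).map T = μy (S y)) :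
    ∀ (n : ℕ) (y : Y), μy (S^[n] y) = (μy y).map (T^[n]) := by
  intro n
  induction n with
  | zero => intro y; simp [Measure.map_id]
  | succ n ih =>
    intro y
    rw [Function.iterate_succ_apply, ih (S y), ← hequiv y,
      Measure.map_map (hT.iterate n) hT, ← Function.iterate_succ T n]

/-! ### Gap arithmetic -/

lemma gaps_from_zero {k l : ℕ} (b : Fin (k + 1) → ℕ)
    (hgaps : ∀ j : Fin (k + 1), ∀ hj : (j : ℕ) + 1 < k + 1,
      ∃ m : ℕ, 0 < m ∧ b ⟨(j : ℕ) + 1, hj⟩ = b j + m * l) :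
    ∀ j : Fin k, ∃ m : ℕ, 0 < m ∧ b j.succ = b 0 + m * l := by
  have key : ∀ t : ℕ, ∀ ht : t < k, ∃ m, 0 < m ∧
      b ⟨t + 1, by omega⟩ = b 0 + m * l := by
    intro t
    induction t with
    | zero =>
      intro ht
      obtain ⟨m, hm, heq⟩ := hgaps ⟨0, by omega⟩ (by simp; omega)
      exact ⟨m, hm, heq⟩
    | succ t iht =>
      intro ht
      obtain ⟨m', hm', heq'⟩ := iht (by omega)
      obtain ⟨m, hm, heq⟩ := hgaps ⟨t + 1, by omega⟩ (by simp; omega)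
      refine ⟨m' + m, by omega, ?_⟩
      have h1 : (⟨t + 1 + 1, by omega⟩ : Fin (k + 1))
          = ⟨((⟨t + 1, by omega⟩ : Fin (k + 1)) : ℕ) + 1, by simp; omega⟩ := rfl
      rw [h1, heq, heq']
      ring
  intro j
  obtain ⟨m, hm, heq⟩ := key (j : ℕ) j.isLt
  refine ⟨m, hm, ?_⟩
  have h2 : j.succ = (⟨(j : ℕ) + 1, by omega⟩ : Fin (k + 1)) := rfl
  rw [h2, heq]

/-! ### The main induction -/

theorem stmt12_aux {X Y : Type*} [MeasurableSpace X] [MeasurableSpace Y]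
    (T : X → X) (hT : Measurable T)
    (S : Y → Y)
    (μy : Y → Measure X) (hprob : ∀ y, IsProbabilityMeasure (μy y))
    (hequiv : ∀ y, (μy y).map T = μy (S y))
    (r : ℕ) (α : Fin r → Set X) (hαm : ∀ i, MeasurableSet (α i))
    (hαdisj : Pairwise (Function.onFun Disjoint α))
    (hαcover : ⋃ i, α i = Set.univ)
    (l : ℕ) (hl : 0 < l) :
    ∀ (k : ℕ) (b : Fin k → ℕ)
      (_ : ∀ j : Fin k, ∀ hj : (j : ℕ) + 1 < k,
        ∃ m : ℕ, 0 < m ∧ b ⟨(j : ℕ) + 1, hj⟩ = b j + m * l)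
      (y : Y),
    ∑ j : Fin k, fiberDynEnt (μy (S^[b j] y)) T l α ≤
      partEnt (μy y) (fun s : Fin k → Fin r => ⋂ j, T^[b j] ⁻¹' α (s j)) := by
  intro k
  induction k with
  | zero =>
    intro b hgaps y
    haveI := hprob y
    rw [Finset.univ_eq_empty, Finset.sum_empty]
    refine Finset.sum_nonneg fun s _ => Real.negMulLog_nonneg ENNReal.toReal_nonneg ?_
    calc ((μy y) _).toReal ≤ ((μy y) Set.univ).toReal :=
          ENNReal.toReal_mono (measure_ne_top _ _) (measure_mono (Set.subset_univ _))
      _ = 1 := by simp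
  | succ k ih =>
    intro b hgaps y
    haveI := hprob y
    set m := μy y with hm
    -- the `A` and `B` partitions
    set A : Fin r → Set X := fun i => T^[b 0] ⁻¹' α i with hA
    set B : (Fin k → Fin r) → Set X :=
      fun s => ⋂ j : Fin k, T^[b j.succ] ⁻¹' α (s j) with hB
    -- measurability etc.
    have hTn : ∀ n : ℕ, Measurable (T^[n]) := fun n => hT.iterate n
    have hAm : ∀ i, MeasurableSet (A i) := fun i => hTn _ (hαm i)
    have hAd : Pairwise (Function.onFun Disjoint A) :=
      fun i j hij => Disjoint.preimage _ (hαdisj hij)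
    have hAc : ⋃ i, A i = Set.univ := by
      rw [hA, ← Set.preimage_iUnion, hαcover, Set.preimage_univ]
    have hBm : ∀ s, MeasurableSet (B s) :=
      fun s => fam_meas α (fun j : Fin k => T^[b j.succ]) (fun j => hTn _) hαm s
    have hBd : Pairwise (Function.onFun Disjoint B) :=
      fam_disjoint α (fun j : Fin k => T^[b j.succ]) hαdisj
    -- step 1: reindex the joint partition and apply the chain rule
    have hjoint : partEnt m (fun s : Fin (k + 1) → Fin r => ⋂ j, T^[b j] ⁻¹' α (s j))
        = partEnt m B + condEnt m A B := by
      rw [← partEnt_chain m A B hAm hAd hAc hBm]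
      unfold partEnt
      rw [← Equiv.sum_comp (Fin.consEquiv (fun _ : Fin (k+1) => Fin r))
        (fun s : Fin (k+1) → Fin r =>
          Real.negMulLog (m (⋂ j, T^[b j] ⁻¹' α (s j))).toReal)]
      refine Finset.sum_congr rfl fun p _ => ?_
      obtain ⟨i, s⟩ := p
      have hcons : (⋂ j, T^[b j] ⁻¹' α
          (Fin.cons (α := fun _ : Fin (k+1) => Fin r) i s j)) = A i ∩ B s := by
        ext x
        simp only [Set.mem_iInter, Set.mem_inter_iff, hA, hB, Set.mem_preimage]
        constructor
        · intro h
          exact ⟨h 0, fun j => by simpa using h j.succ⟩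
        · rintro ⟨h0, hs⟩ j
          refine Fin.cases ?_ ?_ j
          · simpa using h0
          · intro j'
            simpa using hs j'
      show Real.negMulLog (m (⋂ j, T^[b j] ⁻¹' α
        (Fin.cons (α := fun _ : Fin (k+1) => Fin r) i s j))).toReal = _
      rw [hcons]
    rw [hjoint, Fin.sum_univ_succ]
    -- step 2: the IH applied to `b ∘ Fin.succ`
    have hIH := ih (fun j => b j.succ) (fun j hj => by
      have hv : ((j.succ : Fin (k+1)) : ℕ) = (j : ℕ) + 1 := Fin.val_succ j
      obtain ⟨mm, hmm, heq⟩ := hgaps j.succ (by omega)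
      refine ⟨mm, hmm, ?_⟩
      show b (⟨(j : ℕ) + 1, hj⟩ : Fin k).succ = b j.succ + mm * l
      have h1 : (⟨(j : ℕ) + 1, hj⟩ : Fin k).succ
          = (⟨((j.succ : Fin (k+1)) : ℕ) + 1, by omega⟩ : Fin (k + 1)) := by
        ext; simp
      rw [h1, heq]) y
    -- step 3: the conditional entropy bound for the first term
    have hfirst : fiberDynEnt (μy (S^[b 0] y)) T l α ≤ condEnt m A B := by
      -- choose the gap multiples
      obtain ⟨M, hM⟩ := Classical.axiomOfChoice (gaps_from_zero b hgaps)
      set N : ℕ := (∑ j, M j) + 1 with hN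
      have hMle : ∀ j : Fin k, M j ≤ N := by
        intro j
        have : M j ≤ ∑ j', M j' :=
          Finset.single_le_sum (fun j' _ => Nat.zero_le _) (Finset.mem_univ j)
        omega
      have hMpos : ∀ j : Fin k, 0 < M j := fun j => (hM j).1
      -- the refining partition
      set γ : (Fin N → Fin r) → Set X :=
        fun c => T^[b 0] ⁻¹' joinIter T l α N c with hγ
      have hγm : ∀ c, MeasurableSet (γ c) := fun c =>
        (hTn _) (fam_meas α (fun i : Fin N => T^[((i : ℕ) + 1) * l])
          (fun i => hTn _) hαm c)
      have hγd : Pairwise (Function.onFun Disjoint γ) := by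
        intro c c' hcc'
        exact Disjoint.preimage _
          (fam_disjoint α (fun i : Fin N => T^[((i : ℕ) + 1) * l]) hαdisj hcc')
      have hγc : ⋃ c, γ c = Set.univ := by
        have hcov : ⋃ c, joinIter T l α N c = Set.univ :=
          fam_cover α (fun i : Fin N => T^[((i : ℕ) + 1) * l]) hαcover
        simp only [hγ]
        rw [← Set.preimage_iUnion, hcov, Set.preimage_univ]
      -- the fiber map
      set π : (Fin N → Fin r) → (Fin k → Fin r) :=
        fun c j => c ⟨M j - 1, by have := hMpos j; have := hMle j; omega⟩ with hπ
      have hsub : ∀ c, γ c ⊆ B (π c) := by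
        intro c x hx
        have hx' : ∀ i : Fin N, T^[((i : ℕ) + 1) * l] (T^[b 0] x) ∈ α (c i) := by
          simpa [hγ, joinIter, Set.mem_iInter] using hx
        simp only [hB, Set.mem_iInter, Set.mem_preimage]
        intro j
        have hx2 := hx' ⟨M j - 1, by have := hMpos j; have := hMle j; omega⟩
        have hexp : (M j - 1 + 1) * l = M j * l := by
          have := hMpos j; congr 1; omega
        have hb' : b j.succ = M j * l + b 0 := by
          rw [(hM j).2]; ring
        rw [hb', Function.iterate_add_apply]
        simpa [hexp, hπ] using hx2
      -- assemble
      calc fiberDynEnt (μy (S^[b 0] y)) T l α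
          ≤ condEnt (μy (S^[b 0] y)) α (joinIter T l α N) := by
            haveI := hprob (S^[b 0] y)
            exact fiberDynEnt_le (μy (S^[b 0] y)) T hT α hαm hαdisj hαcover l N
        _ = condEnt m A γ := by
            rw [map_iterate T hT S μy hequiv (b 0) y, ← hm]
            exact condEnt_map m (T^[b 0]) (hTn _) α hαm (joinIter T l α N)
              (fun c => fam_meas α (fun i : Fin N => T^[((i : ℕ) + 1) * l])
                (fun i => hTn _) hαm c)
        _ ≤ condEnt m A B :=
            condEnt_le_of_refines m A hAm B γ π hγm hγd hγc hBd hsub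
    have := add_le_add hfirst hIH
    linarith [this]

/-- Key entropy lower bound along return times whose gaps are positive multiples
of `l`: `H_{μ_y}(⋁_j T^{-b_j} α) ≥ Σ_j h_{μ_{S^{b_j} y}}(T^l, α)`. -/
theorem stmt12 {X Y : Type*} [MeasurableSpace X] [MeasurableSpace Y]
    (T : X → X) (hT : Measurable T)
    (T' : X → X) (hT' : Measurable T')
    (hTinv : Function.LeftInverse T' T ∧ Function.RightInverse T' T)
    (S : Y → Y)
    (μy : Y → Measure X) (hprob : ∀ y, IsProbabilityMeasure (μy y))
    (hequiv : ∀ y, (μy y).map T = μy (S y))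
    (r : ℕ) (α : Fin r → Set X) (hαm : ∀ i, MeasurableSet (α i))
    (hαdisj : Pairwise (Function.onFun Disjoint α))
    (hαcover : ⋃ i, α i = Set.univ)
    (l : ℕ) (hl : 0 < l)
    (k : ℕ) (b : Fin k → ℕ) (hb : StrictMono b)
    (hgaps : ∀ j : Fin k, ∀ hj : (j : ℕ) + 1 < k,
      ∃ m : ℕ, 0 < m ∧ b ⟨(j : ℕ) + 1, hj⟩ = b j + m * l)
    (y : Y) :
    ∑ j : Fin k, fiberDynEnt (μy (S^[b j] y)) T l α ≤
      partEnt (μy y) (fun s : Fin k → Fin r => ⋂ j, T^[b j] ⁻¹' α (s j)) :=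
  stmt12_aux T hT S μy hprob hequiv r α hαm hαdisj hαcover l hl k b hgaps y
end
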